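/- There is no nonempty open set U ⊆ ℝ² together with a C¹ immersion F : U → ℝ³ (that is, the derivative DF(u) : ℝ² → ℝ³ is injective at every u ∈ U) such that for every u ∈ U and every w ∈ ℝ², α_{F(u)}(DF(u)w) = 0. In other words, there is no C¹ surface in ℝ³ which is everywhere tangent to the 2-plane field ξ = ker α. -/

import Mathlib

/-- The standard contact form on ℝ³: `α_p(v) = p₁v₂ − p₂v₁ + v₃`. -/
noncomputable def alpha (p v : Fin 3 → ℝ) : ℝ := p 0 * v 1 - p 1 * v 0 + v 2

/-- There is no nonempty open set `U ⊆ ℝ²` together with a C¹ immersion `F : U → ℝ³`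
(the derivative `DF(u)` is injective for every `u ∈ U`) whose image is everywhere tangent to
the standard contact plane field `ξ = ker α`, i.e. with `α_{F(u)}(DF(u)w) = 0` for all
`u ∈ U` and `w ∈ ℝ²`. -/
theorem no_integral_surface :
    ¬ ∃ (U : Set (Fin 2 → ℝ)) (F : (Fin 2 → ℝ) → (Fin 3 → ℝ)),
        U.Nonempty ∧ IsOpen U ∧ ContDiffOn ℝ 1 F U ∧
        (∀ u ∈ U, Function.Injective (fderiv ℝ F u)) ∧
        (∀ u ∈ U, ∀ w : Fin 2 → ℝ, alpha (F u) (fderiv ℝ F u w) = 0) := by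
  rintro ⟨U, F, ⟨u₀, hu₀⟩, hUopen, hF, hinj, htan⟩
  -- the projection ℝ³ → ℝ² onto the first two coordinates
  set P : (Fin 3 → ℝ) →L[ℝ] (Fin 2 → ℝ) :=
    ContinuousLinearMap.pi (fun i => ContinuousLinearMap.proj (Fin.castLE (by norm_num) i))
    with hPdef
  have hPapply : ∀ (z : Fin 3 → ℝ), (P z 0 = z 0) ∧ (P z 1 = z 1) := by
    intro z
    exact ⟨rfl, rfl⟩
  set Φ : (Fin 2 → ℝ) → (Fin 2 → ℝ) := fun u => P (F u) with hΦdef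
  -- differentiability facts
  have hFdiff : ∀ u ∈ U, DifferentiableAt ℝ F u := fun u hu =>
    (hF.differentiableOn one_ne_zero).differentiableAt (hUopen.mem_nhds hu)
  have hΦderiv : ∀ u ∈ U, HasFDerivAt Φ (P.comp (fderiv ℝ F u)) u := fun u hu =>
    P.hasFDerivAt.comp u (hFdiff u hu).hasFDerivAt
  have hΦcd : ContDiffAt ℝ 1 Φ u₀ :=
    (P.contDiff.comp_contDiffOn hF).contDiffAt (hUopen.mem_nhds hu₀)
  -- the derivative of Φ at u₀ is injective, hence an equivalence
  set A : (Fin 2 → ℝ) →L[ℝ] (Fin 2 → ℝ) := P.comp (fderiv ℝ F u₀) with hAdef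
  have hAinj : Function.Injective A := by
    intro a b hab
    have hz' : A (a - b) = 0 := by rw [map_sub, hab, sub_self]
    have h0 : fderiv ℝ F u₀ (a - b) 0 = 0 := by
      have := congrFun hz' 0
      rwa [ContinuousLinearMap.comp_apply, (hPapply _).1] at this
    have h1 : fderiv ℝ F u₀ (a - b) 1 = 0 := by
      have := congrFun hz' 1
      rwa [ContinuousLinearMap.comp_apply, (hPapply _).2] at this
    have h2 : fderiv ℝ F u₀ (a - b) 2 = 0 := by
      have := htan u₀ hu₀ (a - b)
      simp only [alpha, h0, h1] at this
      linarith
    have hz : fderiv ℝ F u₀ (a - b) = fderiv ℝ F u₀ 0 := by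
      rw [map_zero]
      funext i
      fin_cases i <;> assumption
    have := hinj u₀ hu₀ hz
    exact sub_eq_zero.mp this
  -- build the continuous linear equivalence
  let Aeq : (Fin 2 → ℝ) ≃L[ℝ] (Fin 2 → ℝ) :=
    (LinearEquiv.ofInjectiveEndo (A : (Fin 2 → ℝ) →ₗ[ℝ] (Fin 2 → ℝ)) hAinj).toContinuousLinearEquiv
  have hAeq : ((Aeq : (Fin 2 → ℝ) ≃L[ℝ] (Fin 2 → ℝ)) : (Fin 2 → ℝ) →L[ℝ] (Fin 2 → ℝ)) = A := by
    ext w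
    rfl
  have hΦ' : HasFDerivAt Φ ((Aeq : (Fin 2 → ℝ) ≃L[ℝ] (Fin 2 → ℝ)) :
      (Fin 2 → ℝ) →L[ℝ] (Fin 2 → ℝ)) u₀ := by
    rw [hAeq]; exact hΦderiv u₀ hu₀
  -- local inverse
  have hstrict : HasStrictFDerivAt Φ ((Aeq : (Fin 2 → ℝ) ≃L[ℝ] (Fin 2 → ℝ)) :
      (Fin 2 → ℝ) →L[ℝ] (Fin 2 → ℝ)) u₀ := hΦcd.hasStrictFDerivAt' hΦ' one_ne_zero
  set N : (Fin 2 → ℝ) → (Fin 2 → ℝ) := hstrict.localInverse Φ Aeq u₀ with hNdef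
  set v₀ : Fin 2 → ℝ := Φ u₀ with hv₀def
  have hNcd : ContDiffAt ℝ 1 N v₀ := hΦcd.to_localInverse hΦ' one_ne_zero
  have hNv₀ : N v₀ = u₀ := hstrict.localInverse_apply_image
  -- eventual facts near v₀
  have hri : ∀ᶠ v in nhds v₀, Φ (N v) = v := hstrict.eventually_right_inverse
  have hNU : ∀ᶠ v in nhds v₀, N v ∈ U := by
    have hcont : ContinuousAt N v₀ := hstrict.localInverse_continuousAt
    have : U ∈ nhds (N v₀) := by rw [hNv₀]; exact hUopen.mem_nhds hu₀
    exact hcont.preimage_mem_nhds this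
  have hNdiff : ∀ᶠ v in nhds v₀, DifferentiableAt ℝ N v := by
    filter_upwards [hNcd.eventually (by norm_num)] with v hv
    exact hv.differentiableAt one_ne_zero
  -- the bilinear map L v w = v 1 * w 0 - v 0 * w 1
  set p0 : (Fin 2 → ℝ) →L[ℝ] ℝ := ContinuousLinearMap.proj 0 with hp0
  set p1 : (Fin 2 → ℝ) →L[ℝ] ℝ := ContinuousLinearMap.proj 1 with hp1
  set L : (Fin 2 → ℝ) →L[ℝ] ((Fin 2 → ℝ) →L[ℝ] ℝ) :=
    p1.smulRight p0 - p0.smulRight p1 with hLdef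
  have hLapply : ∀ v w : Fin 2 → ℝ, L v w = v 1 * w 0 - v 0 * w 1 := by
    intro v w
    simp only [hLdef, hp0, hp1, ContinuousLinearMap.sub_apply,
      ContinuousLinearMap.smulRight_apply, ContinuousLinearMap.proj_apply, ContinuousLinearMap.smul_apply, smul_eq_mul]

  -- H(v) = third coordinate of F (N v)
  set H : (Fin 2 → ℝ) → ℝ := fun v => F (N v) 2 with hHdef
  have key : ∀ᶠ v in nhds v₀, HasFDerivAt H (L v) v := by
    filter_upwards [hri, hNU, hNdiff, hri.eventually_nhds] with v h1 h2 h3 h4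
    set u := N v with hudef
    set B := fderiv ℝ N v with hBdef
    have hNv : HasFDerivAt N B v := h3.hasFDerivAt
    have hcomp : HasFDerivAt (fun x => F (N x)) ((fderiv ℝ F u).comp B) v :=
      (hFdiff u h2).hasFDerivAt.comp v hNv
    -- Φ ∘ N = id near v, so (P ∘ DF(u)) ∘ B = id
    have hidderiv : HasFDerivAt (fun x => Φ (N x)) ((P.comp (fderiv ℝ F u)).comp B) v :=
      by have := (hΦderiv u h2).comp v hNv; exact this
    have hid2 : HasFDerivAt (fun x => Φ (N x)) (ContinuousLinearMap.id ℝ (Fin 2 → ℝ)) v := by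
      apply (hasFDerivAt_id v).congr_of_eventuallyEq
      filter_upwards [h4] with x hx using hx
    have hBinv : (P.comp (fderiv ℝ F u)).comp B = ContinuousLinearMap.id ℝ (Fin 2 → ℝ) :=
      hidderiv.unique hid2
    have h1' : P (F u) = v := h1
    have hFu0 : F u 0 = v 0 := by
      have := congrFun h1' 0
      rwa [(hPapply _).1] at this
    have hFu1 : F u 1 = v 1 := by
      have := congrFun h1' 1
      rwa [(hPapply _).2] at this
    have hHderiv : HasFDerivAt H ((ContinuousLinearMap.proj 2 :
        (Fin 3 → ℝ) →L[ℝ] ℝ).comp ((fderiv ℝ F u).comp B)) v :=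
      ((ContinuousLinearMap.proj (2 : Fin 3) :
        (Fin 3 → ℝ) →L[ℝ] ℝ).hasFDerivAt).comp v hcomp
    have hEq : ((ContinuousLinearMap.proj 2 :
        (Fin 3 → ℝ) →L[ℝ] ℝ).comp ((fderiv ℝ F u).comp B)) = L v := by
      ext w
      have hw : (P.comp (fderiv ℝ F u)).comp B w = w := by rw [hBinv]; rfl
      have hw0 : fderiv ℝ F u (B w) 0 = w 0 := by
        have := congrFun hw 0
        rwa [ContinuousLinearMap.comp_apply, ContinuousLinearMap.comp_apply,
          (hPapply _).1] at this
      have hw1 : fderiv ℝ F u (B w) 1 = w 1 := by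
        have := congrFun hw 1
        rwa [ContinuousLinearMap.comp_apply, ContinuousLinearMap.comp_apply,
          (hPapply _).2] at this
      have hcontact := htan u h2 (B w)
      simp only [alpha, hw0, hw1, hFu0, hFu1] at hcontact
      simp only [ContinuousLinearMap.comp_apply, ContinuousLinearMap.proj_apply, hLapply]
      linarith
    rw [hEq] at hHderiv
    exact hHderiv
  -- symmetry of second derivatives gives a contradiction
  have hsym := second_derivative_symmetric_of_eventually key (L.hasFDerivAt (x := v₀))
    ![(1 : ℝ), 0] ![(0 : ℝ), 1]
  rw [hLapply, hLapply] at hsym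
  norm_num [Matrix.cons_val_zero, Matrix.cons_val_one] at hsym
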